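/- Let G and H be connected simple graphs, each with m ≥ 5 edges, with maximum degrees Δ(G) and Δ(H). If m − 1 ≥ Δ(G) > Δ(H) ≥ 2m/3, then q(G) > q(H). -/

import Mathlib

open SimpleGraph

/-- The degree of a vertex (with classical decidability). -/
noncomputable def deg {V : Type*} [Fintype V] (G : SimpleGraph V) (v : V) : ℕ :=
  letI := Classical.decEq V
  letI := Classical.decRel G.Adj
  G.degree v

/-- The signless Laplacian matrix `Q(G) = D(G) + A(G)` of a graph. -/
noncomputable def signlessLaplacian {V : Type*} [Fintype V] (G : SimpleGraph V) :
    Matrix V V ℝ :=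
  letI := Classical.decEq V
  letI := Classical.decRel G.Adj
  Matrix.diagonal (fun v => (G.degree v : ℝ)) + G.adjMatrix ℝ

/-- The `Q`-index of a graph: the largest eigenvalue of its signless Laplacian. -/
noncomputable def qIndex {V : Type*} [Fintype V] (G : SimpleGraph V) : ℝ :=
  sSup {μ : ℝ | ∃ x : V → ℝ, x ≠ 0 ∧ (signlessLaplacian G).mulVec x = μ • x}

/-- The maximum degree `Δ(G)` (with classical decidability). -/
noncomputable def maxDeg {V : Type*} [Fintype V] (G : SimpleGraph V) : ℕ :=
  letI := Classical.decEq V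
  letI := Classical.decRel G.Adj
  G.maxDegree

/-- The number of edges (the size) of a graph. -/
noncomputable def edgeCount {V : Type*} (G : SimpleGraph V) : ℕ := G.edgeSet.ncard

set_option linter.unusedSectionVars false
set_option maxHeartbeats 1000000

section Auxiliary

open Finset Matrix

variable {V : Type} [Fintype V] [DecidableEq V] (G : SimpleGraph V) [DecidableRel G.Adj]

lemma sum_sq_pos_of_ne_zero {x : V → ℝ} (hx : x ≠ 0) : 0 < ∑ v, x v ^ 2 := by
  obtain ⟨v, hv⟩ : ∃ v, x v ≠ 0 := by
    by_contra h; push_neg at h; exact hx (funext h)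
  exact Finset.sum_pos' (fun i _ => sq_nonneg _)
    ⟨v, Finset.mem_univ v, by positivity⟩

lemma le_sSup_eigen [Nonempty V] (A : Matrix V V ℝ) (hA : A.IsHermitian) (c : ℝ)
    (hray : ∀ x : V → ℝ, ∑ v, A.mulVec x v * x v ≤ c * ∑ v, x v ^ 2)
    (y : V → ℝ) (hy : y ≠ 0) :
    (∑ v, A.mulVec y v * y v) / (∑ v, y v ^ 2) ≤
      sSup {μ : ℝ | ∃ x : V → ℝ, x ≠ 0 ∧ A.mulVec x = μ • x} := by
  set T := Matrix.toEuclideanLin A with hT_def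
  have hT : T.IsSymmetric := Matrix.isHermitian_iff_isSymmetric.mp hA
  have hTapp : ∀ z : EuclideanSpace ℝ V, T z = A.mulVec z := fun _ => rfl
  have hnorm : ∀ z : EuclideanSpace ℝ V, ‖z‖ ^ 2 = ∑ v, z v ^ 2 := by
    intro z
    rw [EuclideanSpace.norm_eq, Real.sq_sqrt (by positivity)]
    simp [sq_abs]
  have hinner : ∀ z w : EuclideanSpace ℝ V, (inner ℝ z w : ℝ) = ∑ v, z v * w v := by
    intro z w; simp [PiLp.inner_apply, RCLike.inner_apply]
    exact Finset.sum_congr rfl (fun v _ => mul_comm _ _)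
  -- the Rayleigh function
  set f : {x : EuclideanSpace ℝ V // x ≠ 0} → ℝ :=
    fun x => RCLike.re (inner ℝ (T x) (x : EuclideanSpace ℝ V) : ℝ) / ‖(x : EuclideanSpace ℝ V)‖ ^ 2
    with hf_def
  have hfval : ∀ x : {x : EuclideanSpace ℝ V // x ≠ 0},
      f x = (∑ v, A.mulVec (x : EuclideanSpace ℝ V) v * (x : EuclideanSpace ℝ V) v)
            / (∑ v, (x : EuclideanSpace ℝ V) v ^ 2) := by
    intro x
    rw [hf_def]
    simp only [RCLike.re_to_real]
    rw [hinner, hTapp, hnorm]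
  have hfle : ∀ x, f x ≤ c := by
    intro x
    rw [hfval]
    have hpos : (0:ℝ) < ∑ v, (x : EuclideanSpace ℝ V) v ^ 2 := sum_sq_pos_of_ne_zero (fun h => x.2 (by simpa using congrArg (WithLp.toLp 2) h))
    rw [div_le_iff₀ hpos]
    exact hray _
  have hbdd : BddAbove (Set.range f) := ⟨c, by rintro _ ⟨x, rfl⟩; exact hfle x⟩
  have hev : Module.End.HasEigenvalue T ((⨆ x : {x : EuclideanSpace ℝ V // x ≠ 0}, f x : ℝ) : ℝ) :=
    hT.hasEigenvalue_iSup_of_finiteDimensional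
  set μ := (⨆ x : {x : EuclideanSpace ℝ V // x ≠ 0}, f x : ℝ) with hμ_def
  obtain ⟨x, hx⟩ := hev.exists_hasEigenvector
  have hμmem : μ ∈ {μ : ℝ | ∃ x : V → ℝ, x ≠ 0 ∧ A.mulVec x = μ • x} := by
    refine ⟨x, fun h => hx.right (by simpa using congrArg (WithLp.toLp 2) h), ?_⟩
    have := congrArg WithLp.ofLp hx.apply_eq_smul
    rw [hTapp, WithLp.ofLp_smul] at this
    exact this
  have hSbdd : BddAbove {μ : ℝ | ∃ x : V → ℝ, x ≠ 0 ∧ A.mulVec x = μ • x} := by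
    refine ⟨c, ?_⟩
    rintro ν ⟨z, hz0, hz⟩
    have h1 := hray z
    rw [hz] at h1
    have h2 : ∑ v, (ν • z) v * z v = ν * ∑ v, z v ^ 2 := by
      rw [Finset.mul_sum]
      exact Finset.sum_congr rfl (fun v _ => by simp [Pi.smul_apply, smul_eq_mul, sq]; ring)
    rw [h2] at h1
    have hpos := sum_sq_pos_of_ne_zero hz0
    exact le_of_mul_le_mul_right (by linarith) hpos
  have hyle : (∑ v, A.mulVec y v * y v) / (∑ v, y v ^ 2) ≤ μ := by
    have := le_ciSup hbdd (⟨WithLp.toLp 2 y, fun h => hy (by simpa using congrArg WithLp.ofLp h)⟩ : {x : EuclideanSpace ℝ V // x ≠ 0})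
    rw [hfval] at this
    exact this
  exact hyle.trans (le_csSup hSbdd hμmem)

lemma sl_herm : (Matrix.diagonal (fun v => (G.degree v : ℝ)) + G.adjMatrix ℝ).IsHermitian := by
  unfold Matrix.IsHermitian
  ext i j
  simp only [conjTranspose_apply, Matrix.add_apply, diagonal_apply, adjMatrix_apply, star_trivial]
  by_cases hij : i = j
  · subst hij; rfl
  · have : ¬ j = i := fun h => hij h.symm
    rw [if_neg hij, if_neg this]; by_cases ha : G.Adj i j
    · rw [if_pos ha, if_pos (ha.symm)]
    · rw [if_neg ha, if_neg (fun h => ha h.symm)]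

lemma nbr_sum_swap (g : V → ℝ) :
    ∑ v, ∑ t ∈ G.neighborFinset v, g t = ∑ v, (G.degree v : ℝ) * g v := by
  have h1 : ∀ v : V, ∑ t ∈ G.neighborFinset v, g t = ∑ t, if G.Adj v t then g t else 0 := by
    intro v
    rw [neighborFinset_eq_filter, Finset.sum_filter]
  simp_rw [h1]
  rw [Finset.sum_comm]
  refine Finset.sum_congr rfl (fun t _ => ?_)
  rw [Finset.sum_ite, Finset.sum_const, Finset.sum_const_zero, add_zero, nsmul_eq_mul]
  have hfil : Finset.univ.filter (fun v => G.Adj v t) = G.neighborFinset t := by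
    ext v
    simp [SimpleGraph.mem_neighborFinset, G.adj_comm]
  rw [hfil, SimpleGraph.card_neighborFinset_eq_degree]

lemma rayleigh_bound (x : V → ℝ) :
    ∑ v, (Matrix.diagonal (fun v => (G.degree v : ℝ)) + G.adjMatrix ℝ).mulVec x v * x v
      ≤ 2 * (G.maxDegree : ℝ) * ∑ v, x v ^ 2 := by
  have hmv : ∀ v, (Matrix.diagonal (fun v => (G.degree v : ℝ)) + G.adjMatrix ℝ).mulVec x v
      = (G.degree v : ℝ) * x v + ∑ t ∈ G.neighborFinset v, x t := by
    intro v
    rw [Matrix.add_mulVec, Pi.add_apply, Matrix.mulVec_diagonal, adjMatrix_mulVec_apply]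
  calc ∑ v, (Matrix.diagonal (fun v => (G.degree v : ℝ)) + G.adjMatrix ℝ).mulVec x v * x v
      = ∑ v, ((G.degree v : ℝ) * x v ^ 2 + ∑ t ∈ G.neighborFinset v, x t * x v) := by
        refine Finset.sum_congr rfl (fun v _ => ?_)
        rw [hmv v, add_mul, Finset.sum_mul, sq]
        ring_nf
    _ ≤ ∑ v, ((G.degree v : ℝ) * x v ^ 2
          + ∑ t ∈ G.neighborFinset v, (x t ^ 2 / 2 + x v ^ 2 / 2)) := by
        refine Finset.sum_le_sum (fun v _ => ?_)
        refine add_le_add_right (Finset.sum_le_sum (fun t _ => ?_)) _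
        nlinarith [sq_nonneg (x t - x v)]

    _ = ∑ v, 2 * (G.degree v : ℝ) * x v ^ 2 := by
        have : ∀ v : V, ∑ t ∈ G.neighborFinset v, (x t ^ 2 / 2 + x v ^ 2 / 2)
            = (∑ t ∈ G.neighborFinset v, x t ^ 2 / 2) + (G.degree v : ℝ) * (x v ^ 2 / 2) := by
          intro v
          rw [Finset.sum_add_distrib, Finset.sum_const, nsmul_eq_mul]
          rfl
        simp_rw [this]
        rw [Finset.sum_add_distrib, Finset.sum_add_distrib]
        have hswap := nbr_sum_swap G (fun t => x t ^ 2 / 2)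
        rw [hswap]
        rw [← Finset.sum_add_distrib, ← Finset.sum_add_distrib]
        refine Finset.sum_congr rfl (fun v _ => by ring)
    _ ≤ ∑ v, 2 * (G.maxDegree : ℝ) * x v ^ 2 := by
        refine Finset.sum_le_sum (fun v _ => ?_)
        have hd : (G.degree v : ℝ) ≤ (G.maxDegree : ℝ) :=
          Nat.cast_le.mpr (G.degree_le_maxDegree v)
        nlinarith [sq_nonneg (x v)]
    _ = 2 * (G.maxDegree : ℝ) * ∑ v, x v ^ 2 := by rw [Finset.mul_sum]

lemma eig_upper (hd : ∀ v, 0 < G.degree v) {μ : ℝ} {x : V → ℝ} (hx : x ≠ 0)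
    (heig : (Matrix.diagonal (fun v => (G.degree v : ℝ)) + G.adjMatrix ℝ).mulVec x = μ • x)
    (B : ℝ)
    (hB : ∀ v, ((G.degree v : ℝ))^2 + ∑ t ∈ G.neighborFinset v, (G.degree t : ℝ)
      ≤ B * (G.degree v : ℝ)) : μ ≤ B := by
  haveI : Nonempty V := by
    by_contra h
    exact hx (funext (fun v => absurd (Nonempty.intro v) h))
  set z : V → ℝ := fun v => |x v| / (G.degree v : ℝ) with hz_def
  obtain ⟨u, -, hu⟩ := Finset.exists_max_image Finset.univ z ⟨Classical.arbitrary V, Finset.mem_univ _⟩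
  have hu' : ∀ t, z t ≤ z u := fun t => hu t (Finset.mem_univ t)
  have hzu : 0 < z u := by
    obtain ⟨v, hv⟩ : ∃ v, x v ≠ 0 := by
      by_contra h; push_neg at h; exact hx (funext h)
    have : 0 < z v := by
      rw [hz_def]
      have := hd v
      positivity
    exact lt_of_lt_of_le this (hu' v)
  have hne : ∀ t : V, (G.degree t : ℝ) ≠ 0 := fun t => by
    have := hd t; positivity
  have hxu : |x u| = (G.degree u : ℝ) * z u := by
    show |x u| = (G.degree u : ℝ) * (|x u| / (G.degree u : ℝ))
    rw [mul_div_assoc']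
    exact (mul_div_cancel_left₀ _ (hne u)).symm
  have hxt : ∀ t, |x t| ≤ (G.degree t : ℝ) * z u := by
    intro t
    calc |x t| = (G.degree t : ℝ) * z t := by
          show |x t| = (G.degree t : ℝ) * (|x t| / (G.degree t : ℝ))
          rw [mul_div_assoc']
          exact (mul_div_cancel_left₀ _ (hne t)).symm
      _ ≤ (G.degree t : ℝ) * z u := by
          have := hd t
          exact mul_le_mul_of_nonneg_left (hu' t) (by positivity)
  have heq : (μ - (G.degree u : ℝ)) * x u = ∑ t ∈ G.neighborFinset u, x t := by
    have h0 := congrFun heig u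
    rw [Matrix.add_mulVec, Pi.add_apply, Matrix.mulVec_diagonal, adjMatrix_mulVec_apply,
      Pi.smul_apply, smul_eq_mul] at h0
    linarith [h0]
  have habs : |μ - (G.degree u : ℝ)| * ((G.degree u : ℝ) * z u)
      ≤ (∑ t ∈ G.neighborFinset u, (G.degree t : ℝ)) * z u := by
    rw [← hxu, ← abs_mul, heq]
    calc |∑ t ∈ G.neighborFinset u, x t| ≤ ∑ t ∈ G.neighborFinset u, |x t| :=
          Finset.abs_sum_le_sum_abs _ _
      _ ≤ ∑ t ∈ G.neighborFinset u, (G.degree t : ℝ) * z u :=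
          Finset.sum_le_sum (fun t _ => hxt t)
      _ = (∑ t ∈ G.neighborFinset u, (G.degree t : ℝ)) * z u := by rw [Finset.sum_mul]
  have habs2 : |μ - (G.degree u : ℝ)| * (G.degree u : ℝ)
      ≤ ∑ t ∈ G.neighborFinset u, (G.degree t : ℝ) := by
    have := mul_le_mul_of_nonneg_right habs (le_of_lt (inv_pos.mpr hzu))
    rw [mul_assoc, mul_assoc, mul_inv_cancel₀ (ne_of_gt hzu), mul_one] at this
    rwa [mul_assoc, mul_inv_cancel₀ (ne_of_gt hzu), mul_one] at this
  have hdu : (0:ℝ) < (G.degree u : ℝ) := by exact_mod_cast hd u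
  have hfin : μ * (G.degree u : ℝ) ≤ B * (G.degree u : ℝ) := by
    have h1 : (μ - (G.degree u : ℝ)) * (G.degree u : ℝ)
        ≤ |μ - (G.degree u : ℝ)| * (G.degree u : ℝ) :=
      mul_le_mul_of_nonneg_right (le_abs_self _) (le_of_lt hdu)
    have h2 := hB u
    nlinarith
  exact le_of_mul_le_mul_right hfin hdu

lemma arith_bound (Δ k d S c d' : ℕ) (hΔ : 4 ≤ Δ) (hk : 2*k ≤ Δ) (hc : c ≤ 1) (hd1 : 1 ≤ d)
    (hS1 : S ≤ Δ*c + 2*k)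
    (hbr : (d = Δ ∧ c = 1) ∨ (d' + c = d ∧ d' ≤ k ∧ S ≤ Δ*c + d'*(k+1))) :
    d^2 + S ≤ (Δ+2)*d := by
  rcases hbr with ⟨hd, hc1⟩ | ⟨hdc, hd'k, hS2⟩
  · subst hd; subst hc1
    nlinarith
  · rcases Nat.lt_or_ge d 4 with h4 | h4
    · have hd'e : d' = d - c := by omega
      subst hd'e
      interval_cases d <;> interval_cases c <;> omega
    · have hdk : d ≤ k + 1 := by omega
      zify at *
      have p1 : (d:ℤ) * d ≤ d * (k+1) := by nlinarith
      have p2 : (d:ℤ) * (2*k) ≤ d * Δ := by nlinarith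
      have p3 : (4:ℤ) * Δ ≤ d * Δ := by nlinarith
      have hcd : (c:ℤ) * Δ ≤ Δ := by nlinarith
      nlinarith [p1, p2, p3, hcd]

lemma comb_bound (w : V)
    (hdeg1 : ∀ v, 1 ≤ G.degree v)
    (hΔ4 : 4 ≤ G.degree w)
    (h2m : 2 * G.edgeFinset.card ≤ 3 * G.degree w) (v : V) :
    G.degree v ^ 2 + ∑ t ∈ G.neighborFinset v, G.degree t
      ≤ (G.degree w + 2) * G.degree v := by
  -- d' u := number of neighbors of u other than w
  have hud : ∀ u, ((G.neighborFinset u).erase w).card + (if G.Adj u w then 1 else 0) = G.degree u := by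
    intro u
    by_cases h : G.Adj u w
    · rw [if_pos h]
      exact Finset.card_erase_add_one ((G.mem_neighborFinset u w).mpr h)
    · rw [if_neg h, add_zero,
        Finset.erase_eq_of_notMem (fun hmem => h ((G.mem_neighborFinset u w).mp hmem))]
      rfl
  have hd'w : ((G.neighborFinset w).erase w).card = G.degree w := by
    rw [Finset.erase_eq_of_notMem (fun hmem => G.irrefl ((G.mem_neighborFinset w w).mp hmem))]
    rfl
  have hsumdeg : ∑ u, G.degree u = 2 * G.edgeFinset.card := G.sum_degrees_eq_twice_card_edges
  have hsumc : ∑ u, (if G.Adj u w then 1 else 0) = G.degree w := by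
    rw [Finset.sum_ite, Finset.sum_const, Finset.sum_const_zero, add_zero, smul_eq_mul, mul_one]
    have hfil : Finset.univ.filter (fun u => G.Adj u w) = G.neighborFinset w := by
      ext u
      simp [SimpleGraph.mem_neighborFinset, G.adj_comm]
    rw [hfil, SimpleGraph.card_neighborFinset_eq_degree]
  have hsumd' : ∑ u, ((G.neighborFinset u).erase w).card + G.degree w = 2 * G.edgeFinset.card := by
    rw [← hsumdeg, ← hsumc, ← Finset.sum_add_distrib]
    exact Finset.sum_congr rfl (fun u _ => hud u)
  have hsume : ∑ u ∈ Finset.univ.erase w, ((G.neighborFinset u).erase w).card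
      + 2 * G.degree w = 2 * G.edgeFinset.card := by
    have h5 : ∑ u ∈ Finset.univ.erase w, ((G.neighborFinset u).erase w).card
        + ((G.neighborFinset w).erase w).card = ∑ u, ((G.neighborFinset u).erase w).card :=
      Finset.sum_erase_add Finset.univ _ (Finset.mem_univ w)
    omega
  have hΔm : G.degree w ≤ G.edgeFinset.card := by
    have hsub : G.incidenceFinset w ⊆ G.edgeFinset := by
      intro e he
      rw [SimpleGraph.mem_incidenceFinset] at he
      rw [SimpleGraph.mem_edgeFinset]
      exact he.1
    calc G.degree w = (G.incidenceFinset w).card := (G.card_incidenceFinset_eq_degree w).symm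
      _ ≤ G.edgeFinset.card := Finset.card_le_card hsub
  have hd'le : ∀ u, u ≠ w →
      ((G.neighborFinset u).erase w).card + G.degree w ≤ G.edgeFinset.card := by
    intro u hu
    have hcard : ((G.neighborFinset u).erase w).card ≤ (G.edgeFinset \ G.incidenceFinset w).card := by
      apply Finset.card_le_card_of_injOn (fun t => s(u, t))
      · intro t ht
        have ht' := Finset.mem_of_mem_erase ht
        have htw : t ≠ w := Finset.ne_of_mem_erase ht
        have hadj : G.Adj u t := (G.mem_neighborFinset u t).mp ht'
        rw [Finset.mem_coe, Finset.mem_sdiff, SimpleGraph.mem_edgeFinset]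
        refine ⟨hadj, fun hmem => ?_⟩
        rw [SimpleGraph.mem_incidenceFinset] at hmem
        have hw2 : w ∈ (s(u, t) : Sym2 V) := hmem.2
        rw [Sym2.mem_iff] at hw2
        rcases hw2 with h1 | h1
        · exact hu h1.symm
        · exact htw h1.symm
      · intro t1 _ t2 _ heq
        exact (Sym2.congr_right).mp heq
    have hcard2 : (G.edgeFinset \ G.incidenceFinset w).card
        = G.edgeFinset.card - G.degree w := by
      rw [Finset.card_sdiff_of_subset]
      · rw [G.card_incidenceFinset_eq_degree w]
      · intro e he
        rw [SimpleGraph.mem_incidenceFinset] at he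
        rw [SimpleGraph.mem_edgeFinset]
        exact he.1
    omega
  have hdle1 : ∀ t, t ≠ w → G.degree t + G.degree w ≤ G.edgeFinset.card + 1 := by
    intro t ht
    have h1 := hud t
    have h2 := hd'le t ht
    by_cases h : G.Adj t w <;> simp only [h, if_true, if_false] at h1 <;> omega
  have hdled' : ∀ t, G.degree t ≤ ((G.neighborFinset t).erase w).card + 1 := by
    intro t
    have := hud t
    by_cases h : G.Adj t w <;> simp only [h, if_true, if_false] at this <;> omega
  -- split of the neighbor-degree sum when Adj v w
  have hsplit : ∀ u, G.Adj u w →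
      ∑ t ∈ G.neighborFinset u, G.degree t
        = G.degree w + ∑ t ∈ (G.neighborFinset u).erase w, G.degree t := by
    intro u h
    exact (Finset.add_sum_erase _ (fun t => G.degree t)
      ((G.mem_neighborFinset u w).mpr h)).symm
  have hnosplit : ∀ u, ¬ G.Adj u w →
      ∑ t ∈ (G.neighborFinset u).erase w, G.degree t
        = ∑ t ∈ G.neighborFinset u, G.degree t := by
    intro u h
    rw [Finset.erase_eq_of_notMem (fun hmem => h ((G.mem_neighborFinset u w).mp hmem))]
  -- bound A: sum over erased nb set of degrees, via d'
  have hboundA : ∀ u, u ≠ w →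
      ∑ t ∈ (G.neighborFinset u).erase w, G.degree t
        + ((G.neighborFinset w).erase w).card + G.degree w ≤ 2 * G.edgeFinset.card := by
    intro u hu
    have h1 : ∑ t ∈ (G.neighborFinset u).erase w, G.degree t
        ≤ ∑ t ∈ (G.neighborFinset u).erase w, (((G.neighborFinset t).erase w).card + 1) :=
      Finset.sum_le_sum (fun t _ => hdled' t)
    have h2 : ∑ t ∈ (G.neighborFinset u).erase w, (((G.neighborFinset t).erase w).card + 1)
        = ∑ t ∈ (G.neighborFinset u).erase w, ((G.neighborFinset t).erase w).card
          + ((G.neighborFinset u).erase w).card := by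
      rw [Finset.sum_add_distrib, Finset.sum_const, smul_eq_mul, mul_one]
    have hsub2 : (G.neighborFinset u).erase w ⊆ (Finset.univ.erase w).erase u := by
      intro t ht
      refine Finset.mem_erase.mpr ⟨?_, Finset.mem_erase.mpr
        ⟨Finset.ne_of_mem_erase ht, Finset.mem_univ t⟩⟩
      intro h
      exact G.irrefl (h ▸ (G.mem_neighborFinset u t).mp (Finset.mem_of_mem_erase ht))
    have h3 : ∑ t ∈ (G.neighborFinset u).erase w, ((G.neighborFinset t).erase w).card
        ≤ ∑ t ∈ (Finset.univ.erase w).erase u, ((G.neighborFinset t).erase w).card :=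
      Finset.sum_le_sum_of_subset hsub2
    have h4 : ∑ t ∈ (Finset.univ.erase w).erase u, ((G.neighborFinset t).erase w).card
        + ((G.neighborFinset u).erase w).card
        = ∑ t ∈ Finset.univ.erase w, ((G.neighborFinset t).erase w).card :=
      Finset.sum_erase_add _ _ (Finset.mem_erase.mpr ⟨hu, Finset.mem_univ u⟩)
    have hd'w2 := hd'w
    omega
  -- bound for v = w
  have hbvw : ∑ t ∈ G.neighborFinset w, G.degree t
      ≤ G.degree w + (2 * G.edgeFinset.card - 2 * G.degree w) := by
    have h1 : ∑ t ∈ G.neighborFinset w, G.degree t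
        ≤ ∑ t ∈ G.neighborFinset w, (((G.neighborFinset t).erase w).card + 1) :=
      Finset.sum_le_sum (fun t _ => hdled' t)
    have h2 : ∑ t ∈ G.neighborFinset w, (((G.neighborFinset t).erase w).card + 1)
        = ∑ t ∈ G.neighborFinset w, ((G.neighborFinset t).erase w).card + G.degree w := by
      rw [Finset.sum_add_distrib, Finset.sum_const, smul_eq_mul, mul_one,
        SimpleGraph.card_neighborFinset_eq_degree]
    have hsub : G.neighborFinset w ⊆ Finset.univ.erase w := by
      intro t ht
      refine Finset.mem_erase.mpr ⟨?_, Finset.mem_univ t⟩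
      intro h
      exact G.irrefl (h ▸ (G.mem_neighborFinset w t).mp ht)
    have h3 : ∑ t ∈ G.neighborFinset w, ((G.neighborFinset t).erase w).card
        ≤ ∑ t ∈ Finset.univ.erase w, ((G.neighborFinset t).erase w).card :=
      Finset.sum_le_sum_of_subset hsub
    omega
  -- final application
  by_cases hvw : v = w
  · subst hvw
    have := arith_bound (G.degree v) (G.edgeFinset.card - G.degree v) (G.degree v)
      (∑ t ∈ G.neighborFinset v, G.degree t) 1 0 hΔ4 (by omega) le_rfl (hdeg1 v)
      (by omega) (Or.inl ⟨rfl, rfl⟩)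
    omega
  · -- v ≠ w
    have hc : (if G.Adj v w then (1:ℕ) else 0) ≤ 1 := by split <;> omega
    have hbr2 : ((G.neighborFinset v).erase w).card + (if G.Adj v w then 1 else 0) = G.degree v :=
      hud v
    have hS1 : ∑ t ∈ G.neighborFinset v, G.degree t
        ≤ G.degree w * (if G.Adj v w then 1 else 0)
          + 2 * (G.edgeFinset.card - G.degree w) := by
      by_cases h : G.Adj v w
      · have hs := hsplit v h
        have hb := hboundA v hvw
        simp only [h, if_true]
        omega
      · have hs := hnosplit v h
        have hb := hboundA v hvw
        simp only [h, if_false]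
        omega
    have hS2 : ∑ t ∈ G.neighborFinset v, G.degree t
        ≤ G.degree w * (if G.Adj v w then 1 else 0)
          + ((G.neighborFinset v).erase w).card * ((G.edgeFinset.card - G.degree w) + 1) := by
      have hE : ∑ t ∈ (G.neighborFinset v).erase w, G.degree t
          ≤ ((G.neighborFinset v).erase w).card * ((G.edgeFinset.card - G.degree w) + 1) := by
        have h1 : ∑ t ∈ (G.neighborFinset v).erase w, G.degree t
            ≤ ∑ _t ∈ (G.neighborFinset v).erase w, ((G.edgeFinset.card - G.degree w) + 1) :=
          Finset.sum_le_sum (fun t ht => by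
            have := hdle1 t (Finset.ne_of_mem_erase ht)
            omega)
        rw [Finset.sum_const, smul_eq_mul] at h1
        omega
      by_cases h : G.Adj v w
      · have hs := hsplit v h
        simp only [h, if_true]
        omega
      · have hs := hnosplit v h
        simp only [h, if_false]
        omega
    exact arith_bound (G.degree w) (G.edgeFinset.card - G.degree w) (G.degree v)
      (∑ t ∈ G.neighborFinset v, G.degree t) (if G.Adj v w then 1 else 0)
      (((G.neighborFinset v).erase w).card) hΔ4 (by omega) hc (hdeg1 v) hS1
      (Or.inr ⟨hbr2, by have := hd'le v hvw; omega, hS2⟩)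

lemma degree_pos_of_connected
    (hconn : G.Connected) (hnt : Nontrivial V) (v : V) : 0 < G.degree v := by
  rw [G.degree_pos_iff_exists_adj v]
  haveI := hnt
  obtain ⟨u, hu⟩ := exists_ne v
  obtain ⟨p⟩ := hconn v u
  cases p with
  | nil => exact absurd rfl hu.symm
  | cons h _ => exact ⟨_, h⟩

lemma walk_key (w : V) :
    ∀ {u x : V}, G.Walk u x → x = w → u ≠ w → ¬ G.Adj w u →
      ∃ a b, G.Adj w a ∧ G.Adj a b ∧ b ≠ w := by
  intro u x p
  induction p with
  | nil => intro hx hu _; exact absurd hx hu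
  | @cons u' c _ h q ih =>
    intro hx hu hadj
    by_cases hc : c = w
    · subst hc; exact absurd h.symm hadj
    · by_cases hwc : G.Adj w c
      · exact ⟨c, u', hwc, h.symm, hu⟩
      · exact ih hx hc hwc

lemma exists_second_edge
    (hconn : G.Connected) (w : V)
    (hdm : G.degree w < G.edgeFinset.card) :
    ∃ a b, G.Adj w a ∧ G.Adj a b ∧ b ≠ w := by
  have hne : (G.edgeFinset \ G.incidenceFinset w).Nonempty := by
    rw [← Finset.card_pos, Finset.card_sdiff_of_subset]
    · rw [G.card_incidenceFinset_eq_degree w]; omega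
    · intro e he
      rw [SimpleGraph.mem_incidenceFinset] at he
      rw [SimpleGraph.mem_edgeFinset]
      exact he.1
  obtain ⟨e, he⟩ := hne
  rw [Finset.mem_sdiff] at he
  obtain ⟨he1, he2⟩ := he
  induction e with
  | h u v =>
    rw [SimpleGraph.mem_edgeFinset, SimpleGraph.mem_edgeSet] at he1
    have hwe : ¬ w ∈ (s(u,v) : Sym2 V) := by
      intro hmem
      apply he2
      rw [SimpleGraph.mem_incidenceFinset]
      exact ⟨(G.mem_edgeSet).mpr he1, hmem⟩
    rw [Sym2.mem_iff] at hwe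
    push_neg at hwe
    obtain ⟨hwu, hwv⟩ := hwe
    by_cases hadj : G.Adj w u
    · exact ⟨u, v, hadj, he1, fun h => hwv h.symm⟩
    · obtain ⟨p⟩ := hconn u w
      exact walk_key G w p rfl (fun h => hwu h.symm) hadj

lemma gside (w a b : V)
    (hwa : G.Adj w a) (hab : G.Adj a b) (hbw : b ≠ w) :
    ∃ y : V → ℝ, y ≠ 0 ∧
      ((G.degree w : ℝ) + 1) * (∑ v, y v ^ 2)
        < ∑ v, ((Matrix.diagonal (fun v => (G.degree v : ℝ)) + G.adjMatrix ℝ).mulVec y) v * y v := by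
  set Δ : ℝ := (G.degree w : ℝ) with hΔdef
  set y : V → ℝ := fun v => if v = w then Δ else if G.Adj w v then 1 else 0 with hydef
  have hdw : 0 < G.degree w := (G.degree_pos_iff_exists_adj w).mpr ⟨a, hwa⟩
  have hΔ1 : (1:ℝ) ≤ Δ := by rw [hΔdef]; exact_mod_cast hdw
  have hyw : y w = Δ := if_pos rfl
  have hyn : ∀ v, v ∈ G.neighborFinset w → y v = 1 := by
    intro v hv
    have hadj : G.Adj w v := (G.mem_neighborFinset w v).mp hv
    rw [hydef]
    show (if v = w then Δ else if G.Adj w v then 1 else 0) = 1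
    rw [if_neg (fun h => G.irrefl (h ▸ hadj)), if_pos hadj]
  have hynn : ∀ v, 0 ≤ y v := by
    intro v
    rw [hydef]
    show 0 ≤ (if v = w then Δ else if G.Adj w v then 1 else 0)
    split
    · linarith
    · split <;> norm_num
  have hyne : y ≠ 0 := by
    intro h
    have := congrFun h w
    rw [hyw] at this
    simp only [Pi.zero_apply] at this
    linarith
  refine ⟨y, hyne, ?_⟩
  -- sum of squares
  have hsq : ∑ v, y v ^ 2 = Δ^2 + Δ := by
    rw [← Finset.add_sum_erase _ (fun v => y v ^ 2) (Finset.mem_univ w), hyw]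
    congr 1
    have hpt : ∀ v ∈ Finset.univ.erase w, y v ^ 2 = (if G.Adj w v then (1:ℝ) else 0) := by
      intro v hv
      have hvw := Finset.ne_of_mem_erase hv
      rw [hydef]
      show (if v = w then Δ else if G.Adj w v then 1 else 0) ^ 2 = _
      rw [if_neg hvw]
      split <;> norm_num
    rw [Finset.sum_congr rfl hpt, Finset.sum_ite, Finset.sum_const, Finset.sum_const_zero,
      add_zero, nsmul_eq_mul, mul_one]
    have hfil : (Finset.univ.erase w).filter (fun v => G.Adj w v) = G.neighborFinset w := by
      ext v
      simp only [Finset.mem_filter, Finset.mem_erase, Finset.mem_univ, true_and,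
        SimpleGraph.mem_neighborFinset, and_iff_right_iff_imp]
      intro hadj
      exact ⟨fun h => G.irrefl (h ▸ hadj), trivial⟩
    rw [hfil, SimpleGraph.card_neighborFinset_eq_degree, hΔdef]
  -- mulVec formula
  have hmv : ∀ v, ((Matrix.diagonal (fun v => (G.degree v : ℝ)) + G.adjMatrix ℝ).mulVec y) v
      = (G.degree v : ℝ) * y v + ∑ t ∈ G.neighborFinset v, y t := by
    intro v
    rw [Matrix.add_mulVec, Pi.add_apply, Matrix.mulVec_diagonal, adjMatrix_mulVec_apply]
  have htermnn : ∀ v, 0 ≤ ((G.degree v : ℝ) * y v + ∑ t ∈ G.neighborFinset v, y t) * y v := by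
    intro v
    apply mul_nonneg _ (hynn v)
    apply add_nonneg
    · exact mul_nonneg (by positivity) (hynn v)
    · exact Finset.sum_nonneg (fun t _ => hynn t)
  -- lower-bound the total sum by the sum over insert w (neighborFinset w)
  have hwnotN : w ∉ G.neighborFinset w := fun h => G.irrefl ((G.mem_neighborFinset w w).mp h)
  have hsub : insert w (G.neighborFinset w) ⊆ Finset.univ := fun t _ => Finset.mem_univ t
  have hstep1 : ∑ v ∈ insert w (G.neighborFinset w),
        ((G.degree v : ℝ) * y v + ∑ t ∈ G.neighborFinset v, y t) * y v
      ≤ ∑ v, ((G.degree v : ℝ) * y v + ∑ t ∈ G.neighborFinset v, y t) * y v :=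
    Finset.sum_le_sum_of_subset_of_nonneg hsub (fun v _ _ => htermnn v)
  -- compute/lower bound pieces
  have hNsum : ∑ t ∈ G.neighborFinset w, y t = Δ := by
    rw [Finset.sum_congr rfl hyn, Finset.sum_const, nsmul_eq_mul, mul_one,
      SimpleGraph.card_neighborFinset_eq_degree, hΔdef]
  have htermw : ((G.degree w : ℝ) * y w + ∑ t ∈ G.neighborFinset w, y t) * y w
      = (Δ * Δ + Δ) * Δ := by rw [hyw, hNsum, hΔdef]
  -- term at any neighbor v of w is ≥ 1 + Δ
  have htermn : ∀ v ∈ G.neighborFinset w,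
      (1 + Δ) ≤ ((G.degree v : ℝ) * y v + ∑ t ∈ G.neighborFinset v, y t) * y v := by
    intro v hv
    have hadj : G.Adj w v := (G.mem_neighborFinset w v).mp hv
    have hyv : y v = 1 := hyn v hv
    rw [hyv, mul_one, mul_one]
    have hd1 : (1:ℝ) ≤ (G.degree v : ℝ) := by
      exact_mod_cast (G.degree_pos_iff_exists_adj v).mpr ⟨w, hadj.symm⟩
    have hws : w ∈ G.neighborFinset v := (G.mem_neighborFinset v w).mpr hadj.symm
    have hsum : Δ ≤ ∑ t ∈ G.neighborFinset v, y t := by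
      have := Finset.single_le_sum (f := y) (fun t _ => hynn t) hws
      rw [hyw] at this
      exact this
    linarith
  -- term at a is ≥ 2 + Δ
  have hterma : (2 + Δ) ≤ ((G.degree a : ℝ) * y a + ∑ t ∈ G.neighborFinset a, y t) * y a := by
    have haN : a ∈ G.neighborFinset w := (G.mem_neighborFinset w a).mpr hwa
    have hya : y a = 1 := hyn a haN
    rw [hya, mul_one, mul_one]
    have hwb : w ≠ b := fun h => hbw h.symm
    have hpair : ({w, b} : Finset V) ⊆ G.neighborFinset a := by
      intro t ht
      rcases Finset.mem_insert.mp ht with h1 | h1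
      · rw [h1]; exact (G.mem_neighborFinset a w).mpr hwa.symm
      · rw [Finset.mem_singleton] at h1
        rw [h1]; exact (G.mem_neighborFinset a b).mpr hab
    have hsum2 : y w + y b ≤ ∑ t ∈ G.neighborFinset a, y t := by
      have h1 : ∑ t ∈ ({w, b} : Finset V), y t ≤ ∑ t ∈ G.neighborFinset a, y t :=
        Finset.sum_le_sum_of_subset_of_nonneg hpair (fun t _ _ => hynn t)
      rw [Finset.sum_pair hwb] at h1
      exact h1
    rw [hyw] at hsum2
    by_cases hb : G.Adj w b
    · have hyb : y b = 1 := by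
        rw [hydef]
        show (if b = w then Δ else if G.Adj w b then 1 else 0) = 1
        rw [if_neg hbw, if_pos hb]
      rw [hyb] at hsum2
      have hd1 : (1:ℝ) ≤ (G.degree a : ℝ) := by
        exact_mod_cast (G.degree_pos_iff_exists_adj a).mpr ⟨w, hwa.symm⟩
      linarith
    · have hd2 : (2:ℝ) ≤ (G.degree a : ℝ) := by
        have hcard : ({w, b} : Finset V).card ≤ (G.neighborFinset a).card :=
          Finset.card_le_card hpair
        rw [Finset.card_pair hwb, SimpleGraph.card_neighborFinset_eq_degree] at hcard
        exact_mod_cast hcard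
      have hyb : (0:ℝ) ≤ y b := hynn b
      linarith
  -- sum over neighbors
  have haN : a ∈ G.neighborFinset w := (G.mem_neighborFinset w a).mpr hwa
  have hstep2 : (2 + Δ) + ((G.degree w : ℝ) - 1) * (1 + Δ)
      ≤ ∑ v ∈ G.neighborFinset w,
          ((G.degree v : ℝ) * y v + ∑ t ∈ G.neighborFinset v, y t) * y v := by
    rw [← Finset.add_sum_erase _ _ haN]
    have h1 : ∑ v ∈ (G.neighborFinset w).erase a, (1 + Δ)
        ≤ ∑ v ∈ (G.neighborFinset w).erase a,
            ((G.degree v : ℝ) * y v + ∑ t ∈ G.neighborFinset v, y t) * y v :=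
      Finset.sum_le_sum (fun v hv => htermn v (Finset.mem_of_mem_erase hv))
    rw [Finset.sum_const, nsmul_eq_mul, Finset.card_erase_of_mem haN,
      SimpleGraph.card_neighborFinset_eq_degree] at h1
    have hcast : ((G.degree w - 1 : ℕ) : ℝ) = (G.degree w : ℝ) - 1 := by
      have : 1 ≤ G.degree w := hdw
      push_cast [this]
      ring
    rw [hcast] at h1
    have := hterma
    linarith
  -- put it all together
  have htotal : (Δ * Δ + Δ) * Δ + ((2 + Δ) + ((G.degree w : ℝ) - 1) * (1 + Δ))
      ≤ ∑ v, ((G.degree v : ℝ) * y v + ∑ t ∈ G.neighborFinset v, y t) * y v := by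
    have hins : ∑ v ∈ insert w (G.neighborFinset w),
        ((G.degree v : ℝ) * y v + ∑ t ∈ G.neighborFinset v, y t) * y v
        = ((G.degree w : ℝ) * y w + ∑ t ∈ G.neighborFinset w, y t) * y w
          + ∑ v ∈ G.neighborFinset w,
              ((G.degree v : ℝ) * y v + ∑ t ∈ G.neighborFinset v, y t) * y v :=
      Finset.sum_insert hwnotN
    rw [hins, htermw] at hstep1
    linarith
  have hfinal : ∑ v, ((Matrix.diagonal (fun v => (G.degree v : ℝ)) + G.adjMatrix ℝ).mulVec y) v * y v
      = ∑ v, ((G.degree v : ℝ) * y v + ∑ t ∈ G.neighborFinset v, y t) * y v := by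
    exact Finset.sum_congr rfl (fun v _ => by rw [hmv v])
  rw [hfinal, hsq]
  rw [← hΔdef] at htotal
  nlinarith [htotal, hΔ1]


lemma nontrivial_of_edges
    (h : 0 < G.edgeFinset.card) : Nontrivial V := by
  obtain ⟨e, he⟩ := Finset.card_pos.mp h
  induction e with
  | h u v =>
    rw [SimpleGraph.mem_edgeFinset, SimpleGraph.mem_edgeSet] at he
    exact ⟨u, v, G.ne_of_adj he⟩

end Auxiliary

/-- Corollary 2.10: if `m - 1 ≥ Δ(G) > Δ(H) ≥ 2m/3` for connected graphs `G`, `H` with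
`m ≥ 5` edges, then `q(G) > q(H)`. -/
theorem qIndex_lt_of_maxDegree_lt (m : ℕ) (hm : 5 ≤ m)
    (V W : Type) [Fintype V] [Fintype W] (G : SimpleGraph V) (H : SimpleGraph W)
    (hGconn : G.Connected) (hHconn : H.Connected)
    (hGedge : edgeCount G = m) (hHedge : edgeCount H = m)
    (h1 : maxDeg G ≤ m - 1) (h2 : maxDeg H < maxDeg G)
    (h3 : 2 * (m : ℝ) / 3 ≤ (maxDeg H : ℝ)) :
    qIndex H < qIndex G := by
  letI : DecidableEq V := Classical.decEq V
  letI : DecidableRel G.Adj := Classical.decRel G.Adj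
  letI : DecidableEq W := Classical.decEq W
  letI : DecidableRel H.Adj := Classical.decRel H.Adj
  have hQG : signlessLaplacian G
      = Matrix.diagonal (fun v => (G.degree v : ℝ)) + G.adjMatrix ℝ := rfl
  have hQH : signlessLaplacian H
      = Matrix.diagonal (fun v => (H.degree v : ℝ)) + H.adjMatrix ℝ := rfl
  have hMG : maxDeg G = G.maxDegree := rfl
  have hMH : maxDeg H = H.maxDegree := rfl
  have hmG : G.edgeFinset.card = m := by
    rw [← hGedge]
    unfold edgeCount
    rw [Set.ncard_eq_toFinset_card']
    exact congrArg Finset.card (by ext e; simp)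
  have hmH : H.edgeFinset.card = m := by
    rw [← hHedge]
    unfold edgeCount
    rw [Set.ncard_eq_toFinset_card']
    exact congrArg Finset.card (by ext e; simp)
  -- H side (upper bound)
  haveI hntW : Nontrivial W := nontrivial_of_edges H (by rw [hmH]; omega)
  have hdegH : ∀ v, 0 < H.degree v := degree_pos_of_connected H hHconn hntW
  haveI : Nonempty W := hHconn.nonempty
  obtain ⟨wH, hwH⟩ := H.exists_maximal_degree_vertex
  have h2m : 2 * m ≤ 3 * H.degree wH := by
    rw [← hwH, ← hMH]
    have h3' : 2 * (m:ℝ) ≤ 3 * (maxDeg H : ℝ) := by linarith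
    exact_mod_cast h3'
  have hΔ4 : 4 ≤ H.degree wH := by omega
  have hupper : qIndex H ≤ (H.degree wH : ℝ) + 2 := by
    unfold qIndex
    apply Real.sSup_le
    · rintro μ ⟨x, hx0, hxe⟩
      rw [hQH] at hxe
      refine eig_upper H hdegH hx0 hxe _ ?_
      intro v
      have hcomb := comb_bound H wH (fun v => hdegH v) hΔ4 (by rw [hmH]; exact h2m) v
      exact_mod_cast hcomb
    · positivity
  -- G side (lower bound)
  haveI hntV : Nontrivial V := nontrivial_of_edges G (by rw [hmG]; omega)
  haveI : Nonempty V := hGconn.nonempty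
  obtain ⟨wG, hwG⟩ := G.exists_maximal_degree_vertex
  have hdm : G.degree wG < G.edgeFinset.card := by
    rw [hmG, ← hwG, ← hMG]
    omega
  obtain ⟨a, b, hwa, hab, hbw⟩ := exists_second_edge G hGconn wG hdm
  obtain ⟨y, hyne, hylt⟩ := gside G wG a b hwa hab hbw
  have hlow : (G.degree wG : ℝ) + 1 < qIndex G := by
    have hqge := le_sSup_eigen (Matrix.diagonal (fun v => (G.degree v : ℝ)) + G.adjMatrix ℝ)
      (sl_herm G) (2 * (G.maxDegree : ℝ)) (fun x => rayleigh_bound G x) y hyne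
    have hpos : 0 < ∑ v, y v ^ 2 := sum_sq_pos_of_ne_zero hyne
    have hdiv : (G.degree wG : ℝ) + 1
        < (∑ v, (Matrix.diagonal (fun v => (G.degree v : ℝ)) + G.adjMatrix ℝ).mulVec y v * y v)
          / (∑ v, y v ^ 2) := by
      rw [lt_div_iff₀ hpos]
      linarith
    have hqidx : qIndex G = sSup {μ : ℝ | ∃ x : V → ℝ, x ≠ 0 ∧
        (Matrix.diagonal (fun v => (G.degree v : ℝ)) + G.adjMatrix ℝ).mulVec x = μ • x} := by
      unfold qIndex
      rw [hQG]
    rw [hqidx]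
    exact lt_of_lt_of_le hdiv hqge
  -- chain the bounds
  have hnat : H.degree wH + 1 ≤ G.degree wG := by
    have h2' : H.degree wH < G.degree wG := by
      rw [← hwH, ← hwG, ← hMH, ← hMG]
      exact h2
    omega
  have hchain : (H.degree wH : ℝ) + 2 ≤ (G.degree wG : ℝ) + 1 := by
    have : ((H.degree wH : ℝ)) + 1 ≤ (G.degree wG : ℝ) := by exact_mod_cast hnat
    linarith
  calc qIndex H ≤ (H.degree wH : ℝ) + 2 := hupper
    _ ≤ (G.degree wG : ℝ) + 1 := hchain
    _ < qIndex G := hlow
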